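/- Suppose there are no never-treated units and let H̄ = max_i E_i − min_i E_i. Then for any non-negative weights w_it, not all zero, supported on observations with K_it ≥ H̄, the weighted sum Σ_{it: K_it ≥ H̄} w_it τ_it is not identified under parallel trends and no anticipation: there exist two data-generating processes with identical distributions of observed outcomes but different values of the weighted sum. -/
import Mathlib


open Finset

/-- Non-identification of long-run effects: with no never-treated units
(finitely many units, each with an integer event date `E i`), let
`H̄ = max E − min E`.  For any non-negative weights `w`, supported on
observations in `Ω` with relative time `K_it = t − E i ≥ H̄` and not all zero,
the weighted sum `Σ w_it τ_it` is not identified under parallel trends and no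
anticipation: there are two parameter configurations `(α, β, τ)` and
`(α', β', τ')` generating identical mean observed outcomes
`α_i + β_t + τ_it D_it` on all of `Ω` but different values of the weighted
sum. -/
theorem longrun_not_identified {ι : Type*} [Fintype ι] [Nonempty ι]
    (Ω : Finset (ι × ℤ)) (E : ι → ℤ)
    (Hbar : ℤ)
    (hHbar : Hbar = Finset.univ.sup' Finset.univ_nonempty E
        - Finset.univ.inf' Finset.univ_nonempty E)
    (D : ι → ℤ → ℝ) (hD : ∀ i t, D i t = if E i ≤ t then 1 else 0)
    (w : ι → ℤ → ℝ)
    (hw_nonneg : ∀ i t, 0 ≤ w i t)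
    (hw_supp : ∀ i t, w i t ≠ 0 → (i, t) ∈ Ω ∧ Hbar ≤ t - E i)
    (hw_ne : ∃ i t, w i t ≠ 0) :
    ∃ (α : ι → ℝ) (β : ℤ → ℝ) (τ : ι → ℤ → ℝ)
      (α' : ι → ℝ) (β' : ℤ → ℝ) (τ' : ι → ℤ → ℝ),
      (∀ p ∈ Ω, α p.1 + β p.2 + τ p.1 p.2 * D p.1 p.2
          = α' p.1 + β' p.2 + τ' p.1 p.2 * D p.1 p.2) ∧
      (∑ p ∈ Ω, w p.1 p.2 * τ p.1 p.2) ≠ (∑ p ∈ Ω, w p.1 p.2 * τ' p.1 p.2) := by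
  classical
  set g : ℤ → ℝ := fun t => ∑ i : ι, w i t with hg
  have hg_nonneg : ∀ t, 0 ≤ g t := fun t =>
    Finset.sum_nonneg fun i _ => hw_nonneg i t
  -- if g t ≠ 0, everyone is treated at t
  have htreat : ∀ i t, g t ≠ 0 → E i ≤ t := by
    intro i t hgt
    have : ∃ j, w j t ≠ 0 := by
      by_contra h
      push_neg at h
      exact hgt (Finset.sum_eq_zero fun j _ => h j)
    obtain ⟨j, hj⟩ := this
    have h1 := (hw_supp j t hj).2
    have hsup : E i ≤ Finset.univ.sup' Finset.univ_nonempty E :=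
      Finset.le_sup' E (Finset.mem_univ i)
    have hinf : Finset.univ.inf' Finset.univ_nonempty E ≤ E j :=
      Finset.inf'_le E (Finset.mem_univ j)
    omega
  refine ⟨0, 0, 0, 0, fun t => -g t, fun _ t => g t, ?_, ?_⟩
  · intro p hp
    simp only [Pi.zero_apply, zero_mul, add_zero, zero_add]
    by_cases hgt : g p.2 = 0
    · simp [hgt]
    · have hle := htreat p.1 p.2 hgt
      rw [hD, if_pos hle]
      ring
  · simp only [Pi.zero_apply, mul_zero, Finset.sum_const_zero]
    intro h
    obtain ⟨i0, t0, h0⟩ := hw_ne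
    have hmem : (i0, t0) ∈ Ω := (hw_supp i0 t0 h0).1
    have hpos : 0 < ∑ p ∈ Ω, w p.1 p.2 * g p.2 := by
      refine Finset.sum_pos' (fun p _ => mul_nonneg (hw_nonneg _ _) (hg_nonneg _))
        ⟨(i0, t0), hmem, ?_⟩
      have hw0 : 0 < w i0 t0 := lt_of_le_of_ne (hw_nonneg i0 t0) (Ne.symm h0)
      have hgle : w i0 t0 ≤ g t0 :=
        Finset.single_le_sum (fun i _ => hw_nonneg i t0) (Finset.mem_univ i0)
      exact mul_pos hw0 (lt_of_lt_of_le hw0 hgle)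
    exact absurd h.symm (ne_of_gt hpos)
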